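/- arXiv:2103.00942 — 11 statements merged into one kernel-verified Lean document; each statement's English description precedes it below -/
import Mathlib

section
/- Let F = (A, f) be a fuzzy finite automaton over an alphabet X and let F^nd be its associated nondeterministic finite automaton. Then D_1(F) = D_1(F^nd), D_2(F) = D_2(F^nd) and D_3(F) = D_3(F^nd); consequently, for each i = 1, 2, 3, F is Di-directable if and only if F^nd is Di-directable. -/
open scoped Classical

/-- Extended fuzzy transition function `f*` of a fuzzy finite automaton. -/
noncomputable def fstar {A X : Type*} [Fintype A] [Nonempty A]
    (f : A → X → A → unitInterval) : A → List X → A → unitInterval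
  | a, [], b => if b = a then 1 else 0
  | a, x :: v, b => Finset.univ.sup' Finset.univ_nonempty fun c => min (f a x c) (fstar f c v b)

/-- `F(a, w)`: the set of states reachable from `a` by `w` with positive degree. -/
def freach {A X : Type*} [Fintype A] [Nonempty A]
    (f : A → X → A → unitInterval) (a : A) (w : List X) : Set A :=
  {b | 0 < fstar f a w b}

/-- Extended transition function of a nondeterministic finite automaton. -/
def astar {A X : Type*} (α : A → X → Set A) : Set A → List X → Set A
  | H, [] => H
  | H, x :: u => astar α (⋃ b ∈ H, α b x) u

/-- D1-directing words of a fuzzy finite automaton. -/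
def D1set {A X : Type*} [Fintype A] [Nonempty A] (f : A → X → A → unitInterval) :
    Set (List X) := {w | ∃ c, ∀ a, freach f a w = {c}}

/-- D2-directing words of a fuzzy finite automaton. -/
def D2set {A X : Type*} [Fintype A] [Nonempty A] (f : A → X → A → unitInterval) :
    Set (List X) := {w | ∀ a b, freach f a w = freach f b w}

/-- D3-directing words of a fuzzy finite automaton. -/
def D3set {A X : Type*} [Fintype A] [Nonempty A] (f : A → X → A → unitInterval) :
    Set (List X) := {w | ∃ c, ∀ a, c ∈ freach f a w}

/-- D1-, D2- and D3-directing words of an NFA. -/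
def nD1set {A X : Type*} (α : A → X → Set A) : Set (List X) :=
  {w | ∃ c, ∀ a, astar α {a} w = {c}}

def nD2set {A X : Type*} (α : A → X → Set A) : Set (List X) :=
  {w | ∀ a b, astar α {a} w = astar α {b} w}

def nD3set {A X : Type*} (α : A → X → Set A) : Set (List X) :=
  {w | ∃ c, ∀ a, c ∈ astar α {a} w}

lemma astar_union {A X : Type*} (α : A → X → Set A) (w : List X) (H : Set A) :
    astar α H w = ⋃ a ∈ H, astar α {a} w := by
  induction w generalizing H with
  | nil => simp [astar]
  | cons x v ih =>
    simp only [astar, Set.biUnion_singleton]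
    rw [ih]
    ext b
    simp only [Set.mem_iUnion]
    constructor
    · rintro ⟨c, ⟨d, hd, hc⟩, hb⟩
      refine ⟨d, hd, ?_⟩
      rw [ih (α d x)]
      exact Set.mem_iUnion₂.2 ⟨c, hc, hb⟩
    · rintro ⟨d, hd, hb⟩
      rw [ih (α d x)] at hb
      obtain ⟨c, hc, hb⟩ := Set.mem_iUnion₂.1 hb
      exact ⟨c, ⟨d, hd, hc⟩, hb⟩

lemma freach_eq_astar {A X : Type*} [Fintype A] [Nonempty A]
    (f : A → X → A → unitInterval) (w : List X) (a : A) :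
    freach f a w = astar (fun a x => {b | 0 < f a x b}) {a} w := by
  induction w generalizing a with
  | nil =>
    ext b
    simp only [freach, fstar, astar, Set.mem_setOf_eq, Set.mem_singleton_iff]
    split <;> simp_all
  | cons x v ih =>
    ext b
    simp only [freach, fstar, Set.mem_setOf_eq, astar]
    rw [Finset.lt_sup'_iff, astar_union]
    simp only [Set.biUnion_singleton]
    simp only [Set.mem_iUnion, Set.mem_setOf_eq]
    constructor
    · rintro ⟨c, -, hc⟩
      rw [lt_min_iff] at hc
      exact ⟨c, hc.1, by rw [← ih]; exact hc.2⟩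
    · rintro ⟨c, h1, h2⟩
      rw [← ih] at h2
      exact ⟨c, Finset.mem_univ c, lt_min_iff.2 ⟨h1, h2⟩⟩

/-- For an FFA `F` and its associated NFA `F^nd`, `D_i(F) = D_i(F^nd)` for `i = 1, 2, 3`;
consequently `F` is Di-directable iff `F^nd` is Di-directable. -/
theorem stmt1 {A X : Type*} [Fintype X] [Nonempty X] [Fintype A] [Nonempty A]
    (f : A → X → A → unitInterval) :
    D1set f = nD1set (fun a x => {b | 0 < f a x b}) ∧
    D2set f = nD2set (fun a x => {b | 0 < f a x b}) ∧
    D3set f = nD3set (fun a x => {b | 0 < f a x b}) ∧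
    ((D1set f).Nonempty ↔ (nD1set (fun a x => {b | 0 < f a x b})).Nonempty) ∧
    ((D2set f).Nonempty ↔ (nD2set (fun a x => {b | 0 < f a x b})).Nonempty) ∧
    ((D3set f).Nonempty ↔ (nD3set (fun a x => {b | 0 < f a x b})).Nonempty) := by
  have key : ∀ w a, freach f a w = astar (fun a x => {b | 0 < f a x b}) {a} w :=
    fun w a => freach_eq_astar f w a
  have h1 : D1set f = nD1set (fun a x => {b | 0 < f a x b}) := by
    ext w; simp only [D1set, nD1set, Set.mem_setOf_eq, key]
  have h2 : D2set f = nD2set (fun a x => {b | 0 < f a x b}) := by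
    ext w; simp only [D2set, nD2set, Set.mem_setOf_eq, key]
  have h3 : D3set f = nD3set (fun a x => {b | 0 < f a x b}) := by
    ext w; simp only [D3set, nD3set, Set.mem_setOf_eq, key]
  exact ⟨h1, h2, h3, by rw [h1], by rw [h2], by rw [h3]⟩
end

section
/- For any fuzzy finite automaton F = (A, f) over an alphabet X, D_2(F)X* = D_2(F). If moreover F is complete, then X*D_1(F) = D_1(F), X*D_2(F)X* = D_2(F) and X*D_3(F)X* = D_3(F). -/
open scoped Classical

/-- Concatenation of languages: `KL = {uv : u ∈ K, v ∈ L}`. -/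
def conc {X : Type*} (K L : Set (List X)) : Set (List X) :=
  {w | ∃ u ∈ K, ∃ v ∈ L, w = u ++ v}

section Aux
variable {A X : Type*} [Fintype A] [Nonempty A] (f : A → X → A → unitInterval)

lemma mem_freach {a b : A} {w : List X} : b ∈ freach f a w ↔ 0 < fstar f a w b := Iff.rfl

lemma freach_nil (a : A) : freach f a [] = {a} := by
  ext b
  simp only [mem_freach, fstar, Set.mem_singleton_iff]
  by_cases h : b = a <;> simp [h]

lemma fstar_cons_pos {a b : A} {x : X} {w : List X} :
    0 < fstar f a (x :: w) b ↔ ∃ c, 0 < f a x c ∧ 0 < fstar f c w b := by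
  show 0 < Finset.univ.sup' Finset.univ_nonempty (fun c => min (f a x c) (fstar f c w b)) ↔ _
  rw [Finset.lt_sup'_iff]
  simp [lt_min_iff]

lemma fstar_append_pos {a b : A} {u v : List X} :
    0 < fstar f a (u ++ v) b ↔ ∃ c, 0 < fstar f a u c ∧ 0 < fstar f c v b := by
  induction u generalizing a with
  | nil =>
    simp only [List.nil_append]
    constructor
    · intro h; exact ⟨a, by simp [fstar], h⟩
    · rintro ⟨c, hc, hcb⟩
      have : c = a := by by_contra h; simp [fstar, h] at hc
      rwa [this] at hcb
  | cons x u ih =>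
    simp only [List.cons_append, fstar_cons_pos]
    constructor
    · rintro ⟨c, h1, h2⟩
      obtain ⟨d, hd1, hd2⟩ := (ih).mp h2
      exact ⟨d, ⟨c, h1, hd1⟩, hd2⟩
    · rintro ⟨c, ⟨d, hd1, hd2⟩, h2⟩
      exact ⟨d, hd1, (ih).mpr ⟨c, hd2, h2⟩⟩

lemma freach_append (a : A) (u v : List X) :
    freach f a (u ++ v) = ⋃ c ∈ freach f a u, freach f c v := by
  ext b
  simp only [mem_freach, fstar_append_pos, Set.mem_iUnion, exists_prop]

lemma freach_nonempty (hf : ∀ (a : A) (x : X), ∃ b, 0 < f a x b) (a : A) (w : List X) :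
    (freach f a w).Nonempty := by
  induction w generalizing a with
  | nil => exact ⟨a, by simp [freach_nil]⟩
  | cons x w ih =>
    obtain ⟨b, hb⟩ := hf a x
    obtain ⟨d, hd⟩ := ih b
    exact ⟨d, (fstar_cons_pos f).mpr ⟨b, hb, hd⟩⟩

end Aux

/-- `D_2(F)X* = D_2(F)`; if `F` is complete then moreover `X*D_1(F) = D_1(F)`,
`X*D_2(F)X* = D_2(F)` and `X*D_3(F)X* = D_3(F)`. -/
theorem stmt3 {A X : Type*} [Fintype X] [Nonempty X] [Fintype A] [Nonempty A]
    (f : A → X → A → unitInterval) :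
    conc (D2set f) Set.univ = D2set f ∧
    ((∀ (a : A) (x : X), ∃ b, 0 < f a x b) →
      conc Set.univ (D1set f) = D1set f ∧
      conc Set.univ (conc (D2set f) Set.univ) = D2set f ∧
      conc Set.univ (conc (D3set f) Set.univ) = D3set f) := by
  constructor
  · ext w
    constructor
    · rintro ⟨u, hu, v, -, rfl⟩
      intro a b
      rw [freach_append, freach_append, hu a b]
    · intro hw
      exact ⟨w, hw, [], trivial, by simp⟩
  · intro hf
    refine ⟨?_, ?_, ?_⟩
    · ext w
      constructor
      · rintro ⟨u, -, v, ⟨c, hc⟩, rfl⟩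
        refine ⟨c, fun a => ?_⟩
        rw [freach_append]
        ext b
        simp only [Set.mem_iUnion, exists_prop, hc, Set.mem_singleton_iff]
        constructor
        · rintro ⟨d, -, hd⟩; exact hd
        · rintro rfl
          obtain ⟨d, hd⟩ := freach_nonempty f hf a u
          exact ⟨d, hd, rfl⟩
      · intro hw
        exact ⟨[], trivial, w, hw, by simp⟩
    · ext w
      constructor
      · rintro ⟨u, -, s, ⟨w', hw', v, -, rfl⟩, rfl⟩
        have key : ∀ c : A, freach f c (w' ++ v)
            = ⋃ d ∈ freach f (Classical.arbitrary A) w', freach f d v := fun c => by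
          rw [freach_append, hw' c (Classical.arbitrary A)]
        have h2 : ∀ a : A, freach f a (u ++ (w' ++ v))
            = ⋃ d ∈ freach f (Classical.arbitrary A) w', freach f d v := fun a => by
          rw [freach_append]
          simp only [key]
          exact Set.biUnion_const (freach_nonempty f hf a u) _
        intro a b
        rw [h2 a, h2 b]
      · intro hw
        exact ⟨[], trivial, w ++ [], ⟨w, hw, [], trivial, rfl⟩, by simp⟩
    · ext w
      constructor
      · rintro ⟨u, -, s, ⟨w', ⟨c, hc⟩, v, -, rfl⟩, rfl⟩
        obtain ⟨c', hc'⟩ := freach_nonempty f hf c v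
        refine ⟨c', fun a => ?_⟩
        obtain ⟨e, he⟩ := freach_nonempty f hf a u
        rw [mem_freach, fstar_append_pos]
        exact ⟨e, he, (fstar_append_pos f).mpr ⟨c, hc e, hc'⟩⟩
      · intro hw
        exact ⟨[], trivial, w ++ [], ⟨w, hw, [], trivial, rfl⟩, by simp⟩
end

section
/- Let F = (A, f) be a complete fuzzy finite automaton over an alphabet X with |A| = n. If two states a, b ∈ A are D3-merged by some word, then they are D3-merged by a word of length at most n(n−1)/2. -/
open scoped Classical

section Aux

variable {A X : Type*} [Fintype A] [Nonempty A]

/-- A crisp path along a word, recorded as the list of successive states. -/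
def fpath (f : A → X → A → unitInterval) : A → List X → List A → A → Prop
  | a, [], [], c => c = a
  | a, x :: v, d :: r, c => 0 < f a x d ∧ fpath f d v r c
  | _, _, _, _ => False

lemma fpath_length {f : A → X → A → unitInterval} :
    ∀ {a : A} {w : List X} {r : List A} {c : A}, fpath f a w r c → r.length = w.length := by
  intro a w
  induction w generalizing a with
  | nil => intro r c h; cases r with
    | nil => rfl
    | cons d r => exact absurd h (by simp [fpath])
  | cons x v ih => intro r c h; cases r with
    | nil => exact absurd h (by simp [fpath])
    | cons d r => simpa using ih h.2

lemma freach_iff_fpath {f : A → X → A → unitInterval} {a c : A} {w : List X} :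
    c ∈ freach f a w ↔ ∃ r, fpath f a w r c := by
  show 0 < fstar f a w c ↔ _
  induction w generalizing a with
  | nil =>
    constructor
    · intro h
      rw [fstar] at h
      by_cases hc : c = a
      · exact ⟨[], hc⟩
      · simp [hc] at h
    · rintro ⟨r, hr⟩
      cases r with
      | nil => rw [fstar]; simp [fpath] at hr; simp [hr]
      | cons d r => exact absurd hr (by simp [fpath])
  | cons x v ih =>
    rw [fstar, Finset.lt_sup'_iff]
    constructor
    · rintro ⟨d, -, hd⟩
      rw [lt_min_iff] at hd
      obtain ⟨r, hr⟩ := (ih (a := d)).1 hd.2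
      exact ⟨d :: r, hd.1, hr⟩
    · rintro ⟨r, hr⟩
      cases r with
      | nil => exact absurd hr (by simp [fpath])
      | cons d r =>
        exact ⟨d, Finset.mem_univ d, lt_min_iff.2 ⟨hr.1, (ih (a := d)).2 ⟨r, hr.2⟩⟩⟩

lemma fpath_append {f : A → X → A → unitInterval} :
    ∀ {a : A} {u : List X} {r : List A} {c : A}, fpath f a u r c →
      ∀ {v : List X} {s : List A} {e : A}, fpath f c v s e → fpath f a (u ++ v) (r ++ s) e := by
  intro a u
  induction u generalizing a with
  | nil => intro r c h v s e h2; cases r with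
    | nil => simp [fpath] at h; subst h; simpa using h2
    | cons d r => exact absurd h (by simp [fpath])
  | cons x u ih => intro r c h v s e h2; cases r with
    | nil => exact absurd h (by simp [fpath])
    | cons d r => exact ⟨h.1, ih h.2 h2⟩

lemma fpath_take {f : A → X → A → unitInterval} :
    ∀ (i : ℕ) {a : A} {w : List X} {r : List A} {c : A}, fpath f a w r c → i ≤ w.length →
      fpath f a (w.take i) (r.take i) ((a :: r).getD i a) := by
  intro i
  induction i with
  | zero => intro a w r c h hi; simp [fpath]
  | succ i ih =>
    intro a w r c h hi
    cases w with
    | nil => simp at hi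
    | cons x v =>
      cases r with
      | nil => exact absurd h (by simp [fpath])
      | cons d r =>
        have hlen : r.length = v.length := by simpa using fpath_length h.2
        have hi' : i ≤ v.length := by simpa using hi
        have hget : (a :: d :: r).getD (i + 1) a = (d :: r).getD i d := by
          rw [List.getD_cons_succ]
          rw [List.getD_eq_getElem _ _ (by simp; omega), List.getD_eq_getElem _ _ (by simp; omega)]
        rw [hget]
        exact ⟨h.1, ih h.2 hi'⟩

lemma fpath_drop {f : A → X → A → unitInterval} :
    ∀ (i : ℕ) {a : A} {w : List X} {r : List A} {c : A}, fpath f a w r c → i ≤ w.length →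
      fpath f ((a :: r).getD i a) (w.drop i) (r.drop i) c := by
  intro i
  induction i with
  | zero => intro a w r c h hi; simpa using h
  | succ i ih =>
    intro a w r c h hi
    cases w with
    | nil => simp at hi
    | cons x v =>
      cases r with
      | nil => exact absurd h (by simp [fpath])
      | cons d r =>
        have hi' : i ≤ v.length := by simpa using hi
        have hget : (a :: d :: r).getD (i + 1) a = (d :: r).getD i d := by
          have hlen : r.length = v.length := by simpa using fpath_length h.2
          rw [List.getD_cons_succ]
          rw [List.getD_eq_getElem _ _ (by simp; omega), List.getD_eq_getElem _ _ (by simp; omega)]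
        rw [hget]
        exact ih h.2 hi'

end Aux

/-- In a complete `n`-state FFA, if two states are D3-merged by some word, then they are
D3-merged by a word of length at most `n(n-1)/2`. -/
theorem stmt6 {A X : Type*} [Fintype X] [Nonempty X] [Fintype A] [Nonempty A]
    (f : A → X → A → unitInterval)
    (hcomp : ∀ (a : A) (x : X), ∃ b, 0 < f a x b) (a b : A)
    (h : ∃ w : List X, (freach f a w ∩ freach f b w).Nonempty) :
    ∃ w : List X, w.length ≤ Fintype.card A * (Fintype.card A - 1) / 2 ∧
      (freach f a w ∩ freach f b w).Nonempty := by
  classical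
  set N := Fintype.card A * (Fintype.card A - 1) / 2 with hN
  set P : ℕ → Prop := fun k => ∃ w : List X, w.length = k ∧ (freach f a w ∩ freach f b w).Nonempty
    with hP
  have hex : ∃ k, P k := by obtain ⟨w, hw⟩ := h; exact ⟨w.length, w, rfl, hw⟩
  obtain ⟨w, hwlen, c, hca, hcb⟩ := Nat.find_spec hex
  set k0 := Nat.find hex with hk0
  -- it suffices to show k0 ≤ N
  rcases le_or_gt k0 N with hle | hlt
  · exact ⟨w, by omega, c, hca, hcb⟩
  exfalso
  obtain ⟨ra, hra⟩ := freach_iff_fpath.1 hca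
  obtain ⟨rb, hrb⟩ := freach_iff_fpath.1 hcb
  set qa : ℕ → A := fun i => (a :: ra).getD i a with hqa
  set qb : ℕ → A := fun i => (b :: rb).getD i b with hqb
  -- helper to derive a contradiction from a shorter merging word
  have contra : ∀ m : ℕ, m < k0 → P m → False := fun m hm hPm => Nat.find_min hex hm hPm
  by_cases hdiag : ∃ i < k0, qa i = qb i
  · obtain ⟨i, hik, hieq⟩ := hdiag
    have hi : i ≤ w.length := by omega
    have h1 : fpath f a (w.take i) (ra.take i) (qa i) := fpath_take i hra hi
    have h2 : fpath f b (w.take i) (rb.take i) (qb i) := fpath_take i hrb hi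
    rw [← hieq] at h2
    refine contra i hik ⟨w.take i, by simp; omega, qa i, ?_, ?_⟩
    · exact freach_iff_fpath.2 ⟨ra.take i, h1⟩
    · exact freach_iff_fpath.2 ⟨rb.take i, h2⟩
  · push_neg at hdiag
    set g : Fin k0 → {z : Sym2 A // ¬ z.IsDiag} :=
      fun i => ⟨s(qa i, qb i), by rw [Sym2.mk_isDiag_iff]; exact hdiag i i.2⟩ with hg
    have hcard : Fintype.card {z : Sym2 A // ¬ z.IsDiag} < Fintype.card (Fin k0) := by
      rw [Sym2.card_subtype_not_diag, Nat.choose_two_right, Fintype.card_fin]; omega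
    obtain ⟨i, j, hij, hgij⟩ := Fintype.exists_ne_map_eq_of_card_lt g hcard
    -- wlog i < j
    wlog hij' : (i : ℕ) < (j : ℕ) generalizing i j
    · exact this j i hij.symm hgij.symm (by omega)
    have hj : (j : ℕ) ≤ w.length := by have := j.2; omega
    have hi : (i : ℕ) ≤ w.length := by omega
    have heq : s(qa i, qb i) = s(qa j, qb j) := congrArg Subtype.val hgij
    rw [Sym2.eq_iff] at heq
    have hlen : (w.take i ++ w.drop j).length < k0 := by
      simp only [List.length_append, List.length_take, List.length_drop]
      omega
    have hta : fpath f a (w.take i) (ra.take i) (qa i) := fpath_take i hra hi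
    have htb : fpath f b (w.take i) (rb.take i) (qb i) := fpath_take i hrb hi
    have hda : fpath f (qa j) (w.drop j) (ra.drop j) c := fpath_drop j hra hj
    have hdb : fpath f (qb j) (w.drop j) (rb.drop j) c := fpath_drop j hrb hj
    rcases heq with ⟨h1, h2⟩ | ⟨h1, h2⟩
    · -- same orientation: cut out the middle
      rw [← h1] at hda
      rw [← h2] at hdb
      refine contra _ hlen ⟨w.take i ++ w.drop j, rfl, c, ?_, ?_⟩
      · exact freach_iff_fpath.2 ⟨_, fpath_append hta hda⟩
      · exact freach_iff_fpath.2 ⟨_, fpath_append htb hdb⟩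
    · -- swapped: cross over
      rw [← h1] at hdb
      rw [← h2] at hda
      refine contra _ hlen ⟨w.take i ++ w.drop j, rfl, c, ?_, ?_⟩
      · exact freach_iff_fpath.2 ⟨_, fpath_append hta hdb⟩
      · exact freach_iff_fpath.2 ⟨_, fpath_append htb hda⟩
end

section
/- If F = (A, f) is a crisp fuzzy finite automaton over an alphabet X, then DD_1(F) = D_1(F), DD_2(F) = D_2(F) and DD_3(F) = D_3(F). -/
open scoped Classical

/-- A word is DD1-directing: some state `c` is reached from every state with the same
positive degree `r`, and no other state is reachable. -/
def IsDD1 {A X : Type*} [Fintype A] [Nonempty A] (f : A → X → A → unitInterval)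
    (w : List X) : Prop :=
  ∃ (c : A) (r : unitInterval), 0 < r ∧
    ∀ a, fstar f a w c = r ∧ ∀ b, b ≠ c → fstar f a w b = 0

/-- A word is DD2-directing: the fuzzy set of reached states is independent of the start. -/
def IsDD2 {A X : Type*} [Fintype A] [Nonempty A] (f : A → X → A → unitInterval)
    (w : List X) : Prop :=
  ∀ a b c, fstar f a w c = fstar f b w c

/-- A word is DD3-directing: some state `c` has positive and maximal reachability degree
from every state. -/
def IsDD3 {A X : Type*} [Fintype A] [Nonempty A] (f : A → X → A → unitInterval)
    (w : List X) : Prop :=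
  ∃ c, ∀ a, 0 < fstar f a w c ∧ ∀ b, fstar f a w b ≤ fstar f a w c

def DD1set {A X : Type*} [Fintype A] [Nonempty A] (f : A → X → A → unitInterval) :
    Set (List X) := {w | IsDD1 f w}

def DD2set {A X : Type*} [Fintype A] [Nonempty A] (f : A → X → A → unitInterval) :
    Set (List X) := {w | IsDD2 f w}

def DD3set {A X : Type*} [Fintype A] [Nonempty A] (f : A → X → A → unitInterval) :
    Set (List X) := {w | IsDD3 f w}

lemma crisp_fstar {A X : Type*} [Fintype A] [Nonempty A]
    (f : A → X → A → unitInterval)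
    (hcrisp : ∀ (a : A) (x : X) (b : A), f a x b = 0 ∨ f a x b = 1) :
    ∀ (w : List X) (a b : A), fstar f a w b = 0 ∨ fstar f a w b = 1 := by
  intro w
  induction w with
  | nil =>
    intro a b
    simp only [fstar]
    split <;> simp
  | cons x v ih =>
    intro a b
    simp only [fstar]
    by_cases h : ∃ c, f a x c = 1 ∧ fstar f c v b = 1
    · right
      obtain ⟨c, hc1, hc2⟩ := h
      refine le_antisymm (Finset.sup'_le _ _ fun d _ => ?_) ?_
      · exact min_le_of_left_le unitInterval.le_one'
      · have := Finset.le_sup' (f := fun c => min (f a x c) (fstar f c v b))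
          (Finset.mem_univ c)
        rw [hc1, hc2] at this
        simpa only [min_self] using this
    · left
      push_neg at h
      refine le_antisymm (Finset.sup'_le _ _ fun d _ => ?_) unitInterval.nonneg'
      · rcases hcrisp a x d with h1 | h1
        · rw [h1]; simp
        · rcases ih d b with h2 | h2
          · rw [h2]; simp
          · exact absurd h2 (h d h1)

lemma crisp_pos_iff {A X : Type*} [Fintype A] [Nonempty A]
    (f : A → X → A → unitInterval)
    (hcrisp : ∀ (a : A) (x : X) (b : A), f a x b = 0 ∨ f a x b = 1)
    (w : List X) (a b : A) : 0 < fstar f a w b ↔ fstar f a w b = 1 := by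
  rcases crisp_fstar f hcrisp w a b with h | h <;> rw [h] <;> simp

/-- For a crisp FFA, `DD_i(F) = D_i(F)` for `i = 1, 2, 3`. -/
theorem stmt8 {A X : Type*} [Fintype X] [Nonempty X] [Fintype A] [Nonempty A]
    (f : A → X → A → unitInterval)
    (hcrisp : ∀ (a : A) (x : X) (b : A), f a x b = 0 ∨ f a x b = 1) :
    DD1set f = D1set f ∧ DD2set f = D2set f ∧ DD3set f = D3set f := by
  have key := crisp_fstar f hcrisp
  have pos := crisp_pos_iff f hcrisp
  have memiff : ∀ (w : List X) (a b : A), b ∈ freach f a w ↔ 0 < fstar f a w b :=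
    fun _ _ _ => Iff.rfl
  refine ⟨?_, ?_, ?_⟩
  · ext w
    simp only [DD1set, D1set, IsDD1, Set.mem_setOf_eq]
    constructor
    · rintro ⟨c, r, hr, h⟩
      refine ⟨c, fun a => ?_⟩
      ext b
      simp only [memiff, Set.mem_singleton_iff]
      constructor
      · intro hb
        by_contra hbc
        rw [(h a).2 b hbc] at hb
        exact lt_irrefl _ hb
      · rintro rfl
        rw [(h a).1]; exact hr
    · rintro ⟨c, h⟩
      refine ⟨c, 1, zero_lt_one, fun a => ?_⟩
      have hc : (0:unitInterval) < fstar f a w c := by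
        rw [← memiff, h a]; rfl
      refine ⟨(pos w a c).1 hc, fun b hb => ?_⟩
      by_contra hb0
      have h1 : fstar f a w b = 1 := (key w a b).resolve_left hb0
      have : b ∈ freach f a w := by rw [memiff, pos, h1]
      rw [h a] at this
      exact hb this
  · ext w
    simp only [DD2set, D2set, IsDD2, Set.mem_setOf_eq]
    constructor
    · intro h a b
      ext c
      simp only [memiff]
      rw [h a b]
    · intro h a b c
      rcases key w a c with h1 | h1 <;> rcases key w b c with h2 | h2 <;>
        rw [h1, h2]
      · have : c ∈ freach f b w := by rw [memiff, pos, h2]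
        rw [← h a b, memiff, h1] at this
        exact absurd this (lt_irrefl 0)
      · have : c ∈ freach f a w := by rw [memiff, pos, h1]
        rw [h a b, memiff, h2] at this
        exact absurd this (lt_irrefl 0)
  · ext w
    simp only [DD3set, D3set, IsDD3, Set.mem_setOf_eq]
    constructor
    · rintro ⟨c, h⟩
      exact ⟨c, fun a => (memiff w a c).2 (h a).1⟩
    · rintro ⟨c, h⟩
      refine ⟨c, fun a => ⟨(memiff w a c).1 (h a), fun b => ?_⟩⟩
      rw [(pos w a c).1 ((memiff w a c).1 (h a))]
      exact unitInterval.le_one'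
end

section
/- For any fuzzy finite automaton F = (A, f) over an alphabet X, the languages DD_1(F), DD_2(F) and DD_3(F) are regular. -/
open scoped Classical

/-- Extended transition function of a deterministic finite automaton. -/
def dstar {Q X : Type*} (δ : Q → X → Q) : Q → List X → Q
  | q, [] => q
  | q, x :: w => dstar δ (δ q x) w

/-- A language is regular if it is recognized by a deterministic finite automaton
with an initial state and a set of final states. -/
def IsRegularLang {X : Type*} (L : Set (List X)) : Prop :=
  ∃ (Q : Type) (_ : Fintype Q) (δ : Q → X → Q) (q0 : Q) (F : Set Q),
    L = {w | dstar δ q0 w ∈ F}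


private lemma dstar_append' {Q X : Type*} (δ : Q → X → Q) (q : Q) (u v : List X) :
    dstar δ q (u ++ v) = dstar δ (dstar δ q u) v := by
  induction u generalizing q with
  | nil => rfl
  | cons x u ih => simp [dstar, ih]

private lemma sup'_min_ite_right' {A : Type*} [Fintype A] [Nonempty A]
    (g : A → unitInterval) (b : A) :
    (Finset.univ.sup' Finset.univ_nonempty fun c => min (g c) (if b = c then 1 else 0)) = g b := by
  apply le_antisymm
  · apply Finset.sup'_le
    intro c _
    by_cases h : b = c
    · subst h; simp
    · simp [h]
  · refine Finset.le_sup'_of_le _ (Finset.mem_univ b) ?_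
    simp [unitInterval.le_one']

private lemma fstar_append_single' {A X : Type*} [Fintype A] [Nonempty A]
    (f : A → X → A → unitInterval) (w : List X) (x : X) (a b : A) :
    fstar f a (w ++ [x]) b =
      Finset.univ.sup' Finset.univ_nonempty fun c => min (fstar f a w c) (f c x b) := by
  induction w generalizing a with
  | nil =>
    show fstar f a [x] b = _
    rw [show fstar f a [x] b =
        Finset.univ.sup' Finset.univ_nonempty (fun c => min (f a x c) (fstar f c [] b)) from rfl]
    have h1 : (Finset.univ.sup' Finset.univ_nonempty fun c =>
        min (f a x c) (fstar f c [] b)) = f a x b := by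
      have := sup'_min_ite_right' (fun c => f a x c) b
      simpa [fstar] using this
    have h2 : (Finset.univ.sup' Finset.univ_nonempty fun c =>
        min (fstar f a [] c) (f c x b)) = f a x b := by
      apply le_antisymm
      · apply Finset.sup'_le
        intro c _
        by_cases h : c = a
        · subst h; simp [fstar, unitInterval.le_one']
        · simp [fstar, h]
      · refine Finset.le_sup'_of_le _ (Finset.mem_univ a) ?_
        simp [fstar, unitInterval.le_one']
    rw [h1, h2]
  | cons x' v ih =>
    show (Finset.univ.sup' Finset.univ_nonempty fun c =>
        min (f a x' c) (fstar f c (v ++ [x]) b)) = _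
    have step : ∀ c, min (f a x' c) (fstar f c (v ++ [x]) b)
        = Finset.univ.sup' Finset.univ_nonempty
            fun d => min (f a x' c) (min (fstar f c v d) (f d x b)) := by
      intro c
      rw [ih c]
      exact Finset.sup'_inf_distrib_left _ _ _
    simp_rw [step]
    rw [Finset.sup'_comm]
    congr 1
    funext d
    rw [show fstar f a (x' :: v) d =
      Finset.univ.sup' Finset.univ_nonempty (fun c => min (f a x' c) (fstar f c v d)) from rfl]
    rw [Finset.sup'_inf_distrib_right]
    congr 1
    funext c
    simp [min_assoc]

/-- For any FFA `F`, the languages `DD_1(F)`, `DD_2(F)` and `DD_3(F)` are regular. -/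
theorem stmt9 {A X : Type*} [Fintype X] [Nonempty X] [Fintype A] [Nonempty A]
    (f : A → X → A → unitInterval) :
    IsRegularLang (DD1set f) ∧ IsRegularLang (DD2set f) ∧ IsRegularLang (DD3set f) := by
    classical
  set n := Fintype.card A with hn
  set e : A ≃ Fin n := Fintype.equivFin A with he
  set S : Finset unitInterval :=
    insert 0 (insert 1 (Finset.image (fun p : A × X × A => f p.1 p.2.1 p.2.2) Finset.univ)) with hS
  have hfS : ∀ a x b, f a x b ∈ S := by
    intro a x b
    simp only [hS, Finset.mem_insert, Finset.mem_image]
    exact Or.inr (Or.inr ⟨⟨a, x, b⟩, Finset.mem_univ _, rfl⟩)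
  set Q : Type := Fin n → Fin n → {u : unitInterval // u ∈ S} with hQ
  have hQfin : Fintype Q := by infer_instance
  set δ : Q → X → Q := fun q x i j =>
    ⟨Finset.univ.sup' Finset.univ_nonempty fun c : A => min (q i (e c)).1 (f c x (e.symm j)), by
      obtain ⟨c, _, hc⟩ := Finset.exists_mem_eq_sup' Finset.univ_nonempty
        (fun c : A => min (q i (e c)).1 (f c x (e.symm j)))
      rw [hc]
      rcases min_choice ((q i (e c)).1) (f c x (e.symm j)) with h | h <;> rw [h]
      · exact (q i (e c)).2
      · exact hfS _ _ _⟩ with hδ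
  set q0 : Q := fun i j => ⟨if j = i then 1 else 0, by
    split <;> simp [hS]⟩ with hq0
  have key : ∀ (w : List X) (a b : A), ((dstar δ q0 w (e a) (e b)).1) = fstar f a w b := by
    intro w
    induction w using List.reverseRecOn with
    | nil =>
      intro a b
      show (q0 (e a) (e b)).1 = _
      simp only [hq0, fstar, EmbeddingLike.apply_eq_iff_eq]
    | append_singleton w x ih =>
      intro a b
      rw [dstar_append']
      show ((δ (dstar δ q0 w) x) (e a) (e b)).1 = _
      rw [fstar_append_single']
      simp only [hδ, Equiv.symm_apply_apply]
      congr 1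
      funext c
      rw [ih a c]
  refine ⟨⟨Q, hQfin, δ, q0,
      {q | ∃ (c : A) (r : unitInterval), 0 < r ∧
        ∀ a, (q (e a) (e c)).1 = r ∧ ∀ b, b ≠ c → (q (e a) (e b)).1 = 0}, ?_⟩,
    ⟨Q, hQfin, δ, q0,
      {q | ∀ a b c : A, (q (e a) (e c)).1 = (q (e b) (e c)).1}, ?_⟩,
    ⟨Q, hQfin, δ, q0,
      {q | ∃ c : A, ∀ a, 0 < (q (e a) (e c)).1 ∧
        ∀ b, (q (e a) (e b)).1 ≤ (q (e a) (e c)).1}, ?_⟩⟩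
  · ext w
    simp only [DD1set, IsDD1, Set.mem_setOf_eq, key w]
  · ext w
    simp only [DD2set, IsDD2, Set.mem_setOf_eq, key w]
  · ext w
    simp only [DD3set, IsDD3, Set.mem_setOf_eq, key w]
end

section
/- If F = (A, f) is a normal fuzzy finite automaton over an alphabet X, then X*DD_1(F) = DD_1(F), X*DD_2(F)X* = DD_2(F), and X*DD_3(F)X* = DD_3(F). -/
open scoped Classical

section aux
variable {A X : Type*} [Fintype A] [Nonempty A] (f : A → X → A → unitInterval)

lemma fstar_nil (a b : A) : fstar f a ([] : List X) b = if b = a then 1 else 0 := rfl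

lemma fstar_cons (a b : A) (x : X) (v : List X) :
    fstar f a (x :: v) b =
      Finset.univ.sup' Finset.univ_nonempty fun c => min (f a x c) (fstar f c v b) := rfl

lemma sup'_min_one {g : A → unitInterval} (hg : ∃ d, g d = 1) (K : unitInterval) :
    (Finset.univ.sup' Finset.univ_nonempty fun d => min (g d) K) = K := by
  obtain ⟨d, hd⟩ := hg
  refine le_antisymm (Finset.sup'_le _ _ fun c _ => min_le_right _ _) ?_
  have := Finset.le_sup' (fun d => min (g d) K) (Finset.mem_univ d)
  rwa [hd, min_eq_right unitInterval.le_one'] at this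

lemma fstar_append (u : List X) (a : A) (v : List X) (b : A) :
    fstar f a (u ++ v) b =
      Finset.univ.sup' Finset.univ_nonempty fun c => min (fstar f a u c) (fstar f c v b) := by
  induction u generalizing a with
  | nil =>
    simp only [List.nil_append]
    refine le_antisymm ?_ (Finset.sup'_le _ _ fun c _ => ?_)
    · have := Finset.le_sup' (fun c => min (fstar f a ([] : List X) c) (fstar f c v b))
        (Finset.mem_univ a)
      exact le_trans (by simp [fstar_nil, min_eq_right unitInterval.le_one']) this
    · by_cases h : c = a
      · subst h; exact min_le_right _ _
      · simp only [fstar_nil, if_neg h]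
        exact le_trans (min_le_left _ _) unitInterval.nonneg'
  | cons x u ih =>
    simp only [List.cons_append, fstar_cons]
    have h1 : ∀ c : A, min (f a x c) (fstar f c (u ++ v) b) =
        Finset.univ.sup' Finset.univ_nonempty
          fun d => min (f a x c) (min (fstar f c u d) (fstar f d v b)) := by
      intro c
      rw [ih c]
      exact Finset.sup'_inf_distrib_left _ _ _
    have h2 : ∀ d : A,
        min (Finset.univ.sup' Finset.univ_nonempty fun c => min (f a x c) (fstar f c u d))
          (fstar f d v b) =
        Finset.univ.sup' Finset.univ_nonempty
          fun c => min (f a x c) (min (fstar f c u d) (fstar f d v b)) := by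
      intro d
      rw [Finset.sup'_inf_distrib_right]
      exact Finset.sup'_congr _ rfl fun c _ => min_assoc _ _ _
    simp only [h1, h2]
    exact Finset.sup'_comm _ _ _

lemma normal_star (hnormal : ∀ (a : A) (x : X), ∃ b, f a x b = 1) (a : A) (w : List X) :
    ∃ b, fstar f a w b = 1 := by
  induction w generalizing a with
  | nil => exact ⟨a, by simp [fstar_nil]⟩
  | cons x v ih =>
    obtain ⟨c, hc⟩ := hnormal a x
    obtain ⟨b, hb⟩ := ih c
    refine ⟨b, le_antisymm unitInterval.le_one' ?_⟩
    have := Finset.le_sup' (fun c => min (f a x c) (fstar f c v b)) (Finset.mem_univ c)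
    rw [fstar_cons]
    exact le_trans (by simp [hc, hb]) this

lemma IsDD2_append_right (v z : List X) (hv : IsDD2 f v) : IsDD2 f (v ++ z) := by
  intro a b c
  rw [fstar_append, fstar_append]
  exact Finset.sup'_congr _ rfl fun e _ => by rw [hv a b e]

lemma fstar_univ_append (hnormal : ∀ (a : A) (x : X), ∃ b, f a x b = 1)
    (u v : List X) (hv : IsDD2 f v) (a d c : A) :
    fstar f a (u ++ v) c = fstar f d v c := by
  rw [fstar_append]
  rw [show (fun e => min (fstar f a u e) (fstar f e v c)) =
      fun e => min (fstar f a u e) (fstar f d v c) from funext fun e => by rw [hv e d c]]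
  exact sup'_min_one (normal_star f hnormal a u) _

end aux

/-- For a normal FFA `F`: `X*DD_1(F) = DD_1(F)`, `X*DD_2(F)X* = DD_2(F)` and
`X*DD_3(F)X* = DD_3(F)`. -/
theorem stmt12 {A X : Type*} [Fintype X] [Nonempty X] [Fintype A] [Nonempty A]
    (f : A → X → A → unitInterval)
    (hnormal : ∀ (a : A) (x : X), ∃ b, f a x b = 1) :
    conc Set.univ (DD1set f) = DD1set f ∧
    conc Set.univ (conc (DD2set f) Set.univ) = DD2set f ∧
    conc Set.univ (conc (DD3set f) Set.univ) = DD3set f := by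
  refine ⟨?_, ?_, ?_⟩
  · ext w
    constructor
    · rintro ⟨u, -, v, ⟨c, r, hr, hv⟩, rfl⟩
      refine ⟨c, r, hr, fun a => ⟨?_, fun b hb => ?_⟩⟩
      · rw [fstar_append]
        rw [show (fun e => min (fstar f a u e) (fstar f e v c)) =
            fun e => min (fstar f a u e) r from funext fun e => by rw [(hv e).1]]
        exact sup'_min_one (normal_star f hnormal a u) r
      · rw [fstar_append]
        refine le_antisymm (Finset.sup'_le _ _ fun e _ => ?_) unitInterval.nonneg'
        rw [(hv e).2 b hb]
        exact min_le_right _ _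
    · intro hw
      exact ⟨[], trivial, w, hw, rfl⟩
  · ext w
    constructor
    · rintro ⟨u, -, w', ⟨v, hv, z, -, rfl⟩, rfl⟩
      intro a b c
      have hvz : IsDD2 f (v ++ z) := IsDD2_append_right f v z hv
      rw [fstar_univ_append f hnormal u (v ++ z) hvz a (Classical.arbitrary A) c,
        fstar_univ_append f hnormal u (v ++ z) hvz b (Classical.arbitrary A) c]
    · intro hw
      exact ⟨[], trivial, w ++ [], ⟨w, hw, [], trivial, rfl⟩, by simp⟩
  · ext w
    constructor
    · rintro ⟨u, -, w', ⟨v, ⟨c, hc⟩, z, -, rfl⟩, rfl⟩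
      obtain ⟨c'', hc''⟩ := normal_star f hnormal c z
      refine ⟨c'', fun a => ?_⟩
      obtain ⟨d0, hd0⟩ := normal_star f hnormal a u
      have key : ∀ d b, fstar f d (v ++ z) b ≤ fstar f d (v ++ z) c'' := by
        intro d b
        rw [fstar_append, fstar_append]
        refine Finset.sup'_le _ _ fun e _ => ?_
        have h1 : min (fstar f d v e) (fstar f e z b) ≤ fstar f d v c :=
          le_trans (min_le_left _ _) ((hc d).2 e)
        have h2 : fstar f d v c = min (fstar f d v c) (fstar f c z c'') := by
          rw [hc'', min_eq_left unitInterval.le_one']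
        exact le_trans (h2 ▸ h1)
          (Finset.le_sup' (fun e => min (fstar f d v e) (fstar f e z c'')) (Finset.mem_univ c))
      have pos : 0 < fstar f d0 (v ++ z) c'' := by
        rw [fstar_append]
        have hlt : (0 : unitInterval) < min (fstar f d0 v c) (fstar f c z c'') := by
          rw [hc'', min_eq_left unitInterval.le_one']
          exact (hc d0).1
        exact lt_of_lt_of_le hlt
          (Finset.le_sup' (fun e => min (fstar f d0 v e) (fstar f e z c'')) (Finset.mem_univ c))
      constructor
      · rw [fstar_append]
        refine lt_of_lt_of_le ?_
          (Finset.le_sup' (fun e => min (fstar f a u e) (fstar f e (v ++ z) c''))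
            (Finset.mem_univ d0))
        rw [hd0, min_eq_right unitInterval.le_one']
        exact pos
      · intro b
        rw [fstar_append, fstar_append]
        refine Finset.sup'_le _ _ fun e _ => ?_
        exact le_trans (min_le_min le_rfl (key e b))
          (Finset.le_sup' (fun e => min (fstar f a u e) (fstar f e (v ++ z) c''))
            (Finset.mem_univ e))
    · intro hw
      exact ⟨[], trivial, w ++ [], ⟨w, hw, [], trivial, rfl⟩, by simp⟩
end

section
/- Let (A, X, δ) be a deterministic finite automaton and let A^fz = (A, f) be the fuzzy finite automaton over X defined by f(a, x, b) = 1 if δ(a, x) = b and f(a, x, b) = 0 otherwise. Then A^fz is normal; for all a, b ∈ A and w ∈ X*, f*(a, w, b) = 1 if δ*(a, w) = b and f*(a, w, b) = 0 otherwise; and DD_1(A^fz) = DD_2(A^fz) = DD_3(A^fz) = DW, where DW is the set of directing words of the DFA. -/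
open scoped Classical

/-- The crisp FFA associated with a DFA. -/
noncomputable def dfaFuzzy {A X : Type*} (δ : A → X → A) : A → X → A → unitInterval :=
  fun a x b => if δ a x = b then 1 else 0

lemma fstar_char {A X : Type*} [Fintype A] [Nonempty A] (δ : A → X → A) :
    ∀ (w : List X) (a b : A),
      fstar (dfaFuzzy δ) a w b = if dstar δ a w = b then 1 else 0 := by
  intro w
  induction w with
  | nil => intro a b; simp [fstar, dstar, eq_comm]; split_ifs with h <;> simp [h]
  | cons x v ih =>
    intro a b
    rw [show dstar δ a (x :: v) = dstar δ (δ a x) v from rfl, ← ih (δ a x) b]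
    show Finset.univ.sup' _ (fun c => min (dfaFuzzy δ a x c) (fstar (dfaFuzzy δ) c v b)) = _
    apply le_antisymm
    · apply Finset.sup'_le
      intro c _
      by_cases hc : δ a x = c
      · subst hc; exact min_le_right _ _
      · have h0 : dfaFuzzy δ a x c = 0 := by simp [dfaFuzzy, hc]
        rw [h0]
        exact le_trans (min_le_left _ _) unitInterval.nonneg'
    · have h1 : dfaFuzzy δ a x (δ a x) = 1 := by simp [dfaFuzzy]
      calc fstar (dfaFuzzy δ) (δ a x) v b
          = min (dfaFuzzy δ a x (δ a x)) (fstar (dfaFuzzy δ) (δ a x) v b) := by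
            rw [h1, min_eq_right unitInterval.le_one']
        _ ≤ _ := Finset.le_sup' (fun c => min (dfaFuzzy δ a x c) (fstar (dfaFuzzy δ) c v b)) (Finset.mem_univ (δ a x))

/-- For a DFA `(A, X, δ)`, the FFA `A^fz` is normal, its extended transitions are the
characteristic function of `δ*`, and `DD_1(A^fz) = DD_2(A^fz) = DD_3(A^fz) = DW`,
the set of directing words of the DFA. -/
theorem stmt13 {A X : Type*} [Fintype X] [Nonempty X] [Fintype A] [Nonempty A]
    (δ : A → X → A) :
    (∀ (a : A) (x : X), ∃ b, dfaFuzzy δ a x b = 1) ∧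
    (∀ (a : A) (w : List X) (b : A),
      fstar (dfaFuzzy δ) a w b = if dstar δ a w = b then 1 else 0) ∧
    DD1set (dfaFuzzy δ) = {w : List X | ∃ c, ∀ a, dstar δ a w = c} ∧
    DD2set (dfaFuzzy δ) = {w : List X | ∃ c, ∀ a, dstar δ a w = c} ∧
    DD3set (dfaFuzzy δ) = {w : List X | ∃ c, ∀ a, dstar δ a w = c} := by
  
  constructor
  · intro a x
    exact ⟨δ a x, by simp [dfaFuzzy]⟩
  refine ⟨fun a w b => fstar_char δ w a b, ?_, ?_, ?_⟩
  · ext w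
    constructor
    · rintro ⟨c, r, hr, h⟩
      refine ⟨c, fun a => ?_⟩
      have := (h a).1
      rw [fstar_char] at this
      by_contra hne
      rw [if_neg hne] at this
      exact absurd (this ▸ hr) (lt_irrefl _)
    · rintro ⟨c, hc⟩
      refine ⟨c, 1, by norm_num, fun a => ⟨?_, fun b hb => ?_⟩⟩
      · rw [fstar_char, if_pos (hc a)]
      · rw [fstar_char, if_neg]
        rw [hc a]; exact fun h => hb h.symm
  · ext w
    constructor
    · intro h
      obtain ⟨a0⟩ := ‹Nonempty A›
      refine ⟨dstar δ a0 w, fun a => ?_⟩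
      have := h a a0 (dstar δ a0 w)
      rw [fstar_char, fstar_char, if_pos rfl] at this
      by_contra hne
      rw [if_neg hne] at this
      exact zero_ne_one this
    · rintro ⟨c, hc⟩
      intro a b d
      rw [fstar_char, fstar_char, hc a, hc b]
  · ext w
    constructor
    · rintro ⟨c, h⟩
      refine ⟨c, fun a => ?_⟩
      have := (h a).1
      rw [fstar_char] at this
      by_contra hne
      rw [if_neg hne] at this
      exact absurd this (lt_irrefl _)
    · rintro ⟨c, hc⟩
      refine ⟨c, fun a => ⟨?_, fun b => ?_⟩⟩
      · rw [fstar_char, if_pos (hc a)]; norm_num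
      · rw [fstar_char, fstar_char, if_pos (hc a)]
        exact unitInterval.le_one'
end

section
/- If F = (A, f) is a normal fuzzy finite automaton over an alphabet X, then every DD2-directing word of F is DD3-directing, i.e., DD_2(F) ⊆ DD_3(F). In fact, for every w ∈ DD_2(F) there is a state c ∈ A with f*(a, w, c) = 1 for every a ∈ A. -/
open scoped Classical

lemma fstar_le_one {A X : Type*} [Fintype A] [Nonempty A]
    (f : A → X → A → unitInterval) (a : A) (w : List X) (b : A) :
    fstar f a w b ≤ 1 := (fstar f a w b).2.2

lemma exists_fstar_one {A X : Type*} [Fintype A] [Nonempty A]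
    (f : A → X → A → unitInterval)
    (hnormal : ∀ (a : A) (x : X), ∃ b, f a x b = 1) :
    ∀ (w : List X) (a : A), ∃ b, fstar f a w b = 1 := by
  intro w
  induction w with
  | nil => intro a; exact ⟨a, by simp [fstar]⟩
  | cons x v ih =>
    intro a
    obtain ⟨c, hc⟩ := hnormal a x
    obtain ⟨b, hb⟩ := ih c
    refine ⟨b, le_antisymm (fstar_le_one f a (x :: v) b) ?_⟩
    have h1 : (1 : unitInterval) = min (f a x c) (fstar f c v b) := by
      rw [hc, hb, min_self]
    rw [fstar, h1]
    exact Finset.le_sup' (fun c => min (f a x c) (fstar f c v b)) (Finset.mem_univ c)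

/-- For a normal FFA `F`, `DD_2(F) ⊆ DD_3(F)`; in fact every DD2-directing word reaches
some common state with degree 1 from every state. -/
theorem stmt14 {A X : Type*} [Fintype X] [Nonempty X] [Fintype A] [Nonempty A]
    (f : A → X → A → unitInterval)
    (hnormal : ∀ (a : A) (x : X), ∃ b, f a x b = 1) :
    DD2set f ⊆ DD3set f ∧
    (∀ w ∈ DD2set f, ∃ c, ∀ a, fstar f a w c = 1) := by
  have key : ∀ w ∈ DD2set f, ∃ c, ∀ a, fstar f a w c = 1 := by
    intro w hw
    obtain ⟨c, hc⟩ := exists_fstar_one f hnormal w (Classical.arbitrary A)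
    exact ⟨c, fun a => (hw a (Classical.arbitrary A) c).trans hc⟩
  refine ⟨fun w hw => ?_, key⟩
  obtain ⟨c, hc⟩ := key w hw
  refine ⟨c, fun a => ⟨?_, fun b => ?_⟩⟩
  · rw [hc a]; exact zero_lt_one
  · rw [hc a]; exact fstar_le_one f a w b
end

section
/- Let X be a finite nonempty alphabet and L ⊆ X* a nonempty language. Then L = DD_2(F) for some normal fuzzy finite automaton F over X if and only if L = DW(A) for some directable deterministic finite automaton A over X. The same holds with DD_2 replaced by DD_3. -/
open scoped Classical

namespace S15
set_option linter.unusedSectionVars false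
open Finset
lemma uzlo : (0 : unitInterval) < 1 := by rw [← Subtype.coe_lt_coe]; norm_num

open Finset

section General
variable {S : Type} {X : Type*} [Fintype S] [Nonempty S]

omit [Fintype S] [Nonempty S] in
lemma dstar_mem_closed (step : S → X → S) (F : Set S)
    (hF : ∀ g ∈ F, ∀ x, step g x ∈ F) :
    ∀ (w : List X) (g : S), g ∈ F → dstar step g w ∈ F := by
  intro w
  induction w with
  | nil => intro g hg; exact hg
  | cons x v ih => intro g hg; exact ih _ (hF g hg x)

lemma generalDW (step : S → X → S) (F : Set S)
    (hF : ∀ g ∈ F, ∀ x, step g x ∈ F) :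
    ∃ (Q : Type) (_ : Fintype Q) (_ : Nonempty Q) (δ : Q → X → Q),
      {w : List X | ∃ c, ∀ q, dstar δ q w = c} = {w | ∀ g, dstar step g w ∈ F} := by
  classical
  refine ⟨{g : S // g ∉ F} ⊕ Unit, inferInstance, ⟨Sum.inr ()⟩, ?_, ?_⟩
  · exact fun q x => match q with
      | Sum.inr _ => Sum.inr ()
      | Sum.inl ⟨g, hg⟩ => if h : step g x ∈ F then Sum.inr () else Sum.inl ⟨step g x, h⟩
  set δ : ({g : S // g ∉ F} ⊕ Unit) → X → ({g : S // g ∉ F} ⊕ Unit) :=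
    fun q x => match q with
      | Sum.inr _ => Sum.inr ()
      | Sum.inl ⟨g, hg⟩ => if h : step g x ∈ F then Sum.inr () else Sum.inl ⟨step g x, h⟩
    with hδ
  have sink : ∀ (w : List X) (u : Unit), dstar δ (Sum.inr u) w = Sum.inr () := by
    intro w
    induction w with
    | nil => intro u; rfl
    | cons x v ih => intro u; exact ih ()
  have claimA : ∀ (w : List X) (g : S) (hg : g ∉ F),
      dstar δ (Sum.inl ⟨g, hg⟩) w = Sum.inr () ↔ dstar step g w ∈ F := by
    intro w
    induction w with
    | nil =>
      intro g hg
      simp only [dstar]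
      constructor
      · intro h; exact absurd h (by simp)
      · intro h; exact absurd h hg
    | cons x v ih =>
      intro g hg
      show dstar δ (δ (Sum.inl ⟨g, hg⟩) x) v = Sum.inr () ↔ dstar step (step g x) v ∈ F
      by_cases h : step g x ∈ F
      · simp only [hδ, dif_pos h]
        constructor
        · intro _; exact dstar_mem_closed step F hF v _ h
        · intro _; exact sink v ()
      · simp only [hδ, dif_neg h]
        exact ih (step g x) h
  ext w
  simp only [Set.mem_setOf_eq]
  constructor
  · rintro ⟨c, hc⟩ g
    by_cases hg : g ∈ F
    · exact dstar_mem_closed step F hF w g hg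
    · have h1 := hc (Sum.inl ⟨g, hg⟩)
      have h2 := hc (Sum.inr ())
      rw [sink w ()] at h2
      exact (claimA w g hg).mp (h1.trans h2.symm)
  · intro h
    refine ⟨Sum.inr (), fun q => ?_⟩
    match q with
    | Sum.inr u => exact sink w u
    | Sum.inl ⟨g, hg⟩ => exact (claimA w g hg).mpr (h g)
end General
variable {A X : Type*} [Fintype A] [Nonempty A]

/-- The crisp FFA associated to a DFA. -/
noncomputable def crisp (δ : A → X → A) : A → X → A → unitInterval :=
  fun a x b => if b = δ a x then 1 else 0

lemma crisp_fstar (δ : A → X → A) :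
    ∀ (w : List X) (a b : A), fstar (crisp δ) a w b = if b = dstar δ a w then 1 else 0 := by
  intro w
  induction w with
  | nil => intro a b; rfl
  | cons x v ih =>
    intro a b
    show Finset.univ.sup' Finset.univ_nonempty
        (fun c => min (crisp δ a x c) (fstar (crisp δ) c v b)) = _
    have hd : dstar δ a (x :: v) = dstar δ (δ a x) v := rfl
    rw [hd]
    apply le_antisymm
    · apply Finset.sup'_le
      intro c _
      by_cases hc : c = δ a x
      · subst hc
        rw [show crisp δ a x (δ a x) = 1 from if_pos rfl, min_eq_right unitInterval.le_one', ih]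
      · rw [show crisp δ a x c = 0 from if_neg hc, min_eq_left unitInterval.nonneg']
        exact unitInterval.nonneg'
    · calc (if b = dstar δ (δ a x) v then (1:unitInterval) else 0)
          = min (crisp δ a x (δ a x)) (fstar (crisp δ) (δ a x) v b) := by
            rw [show crisp δ a x (δ a x) = 1 from if_pos rfl,
              min_eq_right unitInterval.le_one', ih]
        _ ≤ _ := Finset.le_sup' (fun c => min (crisp δ a x c) (fstar (crisp δ) c v b)) (Finset.mem_univ (δ a x))

lemma crisp_normal (δ : A → X → A) : ∀ (a : A) (x : X), ∃ b, crisp δ a x b = 1 :=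
  fun a x => ⟨δ a x, if_pos rfl⟩

lemma crisp_DD2 (δ : A → X → A) :
    DD2set (crisp δ) = {w : List X | ∃ c, ∀ a, dstar δ a w = c} := by
  ext w
  simp only [DD2set, Set.mem_setOf_eq, IsDD2]
  constructor
  · intro h
    obtain ⟨a₀⟩ := ‹Nonempty A›
    refine ⟨dstar δ a₀ w, fun a => ?_⟩
    have := h a a₀ (dstar δ a₀ w)
    rw [crisp_fstar, crisp_fstar, if_pos rfl] at this
    by_contra hne
    rw [if_neg (by intro h'; exact hne h'.symm)] at this
    exact uzlo.ne this
  · rintro ⟨c, hc⟩ a b d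
    rw [crisp_fstar, crisp_fstar, hc a, hc b]

lemma crisp_DD3 (δ : A → X → A) :
    DD3set (crisp δ) = {w : List X | ∃ c, ∀ a, dstar δ a w = c} := by
  ext w
  simp only [DD3set, Set.mem_setOf_eq, IsDD3]
  constructor
  · rintro ⟨c, hc⟩
    refine ⟨c, fun a => ?_⟩
    have := (hc a).1
    rw [crisp_fstar] at this
    by_contra hne
    rw [if_neg (by intro h'; exact hne h'.symm)] at this
    exact lt_irrefl _ this
  · rintro ⟨c, hc⟩
    refine ⟨c, fun a => ?_⟩
    constructor
    · rw [crisp_fstar, hc a, if_pos rfl]; exact uzlo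
    · intro b; rw [crisp_fstar, crisp_fstar, hc a, if_pos rfl]; exact unitInterval.le_one'
variable {A X : Type*} [Fintype A] [Nonempty A] (f : A → X → A → unitInterval)

lemma fstar_cons_one {a b : A} {x : X} {v : List X} :
    fstar f a (x :: v) b = 1 ↔ ∃ c, f a x c = 1 ∧ fstar f c v b = 1 := by
  constructor
  · intro h
    obtain ⟨c, -, hc⟩ := Finset.exists_mem_eq_sup' Finset.univ_nonempty
      (fun c => min (f a x c) (fstar f c v b))
    have hc' : min (f a x c) (fstar f c v b) = 1 := by
      rw [← hc]; exact h
    refine ⟨c, le_antisymm unitInterval.le_one' ?_, le_antisymm unitInterval.le_one' ?_⟩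
    · rw [← hc']; exact min_le_left _ _
    · rw [← hc']; exact min_le_right _ _
  · rintro ⟨c, h1, h2⟩
    apply le_antisymm unitInterval.le_one'
    calc (1 : unitInterval) = min (f a x c) (fstar f c v b) := by rw [h1, h2, min_self]
      _ ≤ _ := Finset.le_sup' (fun c => min (f a x c) (fstar f c v b)) (Finset.mem_univ c)

lemma fstar_nil_one {a b : A} : fstar f a [] b = 1 ↔ b = a := by
  show (if b = a then (1:unitInterval) else 0) = 1 ↔ b = a
  by_cases h : b = a <;> simp [h, uzlo.ne]

lemma normal_fstar_one (hn : ∀ (a : A) (x : X), ∃ b, f a x b = 1) :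
    ∀ (w : List X) (a : A), ∃ b, fstar f a w b = 1 := by
  intro w
  induction w with
  | nil => intro a; exact ⟨a, (fstar_nil_one f).mpr rfl⟩
  | cons x v ih =>
    intro a
    obtain ⟨c, hc⟩ := hn a x
    obtain ⟨b, hb⟩ := ih c
    exact ⟨b, (fstar_cons_one f).mpr ⟨c, hc, hb⟩⟩

lemma isDD3_iff (hn : ∀ (a : A) (x : X), ∃ b, f a x b = 1) (w : List X) :
    IsDD3 f w ↔ ∃ c, ∀ a, fstar f a w c = 1 := by
  constructor
  · rintro ⟨c, hc⟩
    refine ⟨c, fun a => ?_⟩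
    obtain ⟨b, hb⟩ := normal_fstar_one f hn w a
    exact le_antisymm unitInterval.le_one' (hb ▸ (hc a).2 b)
  · rintro ⟨c, hc⟩
    exact ⟨c, fun a => ⟨(hc a) ▸ uzlo, fun b => (hc a) ▸ unitInterval.le_one'⟩⟩

section DD3F
variable {A : Type} {X : Type*} [Fintype A] [Nonempty A]

/-- crisp-subset state space -/
def S3 (A : Type) [Fintype A] : Type := {g : A → Finset A // ∀ a, (g a).Nonempty}

noncomputable instance : Fintype (S3 A) := by unfold S3; infer_instance
instance : Nonempty (S3 A) := ⟨⟨fun a => {a}, fun a => ⟨a, Finset.mem_singleton_self a⟩⟩⟩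

noncomputable def step3 (f : A → X → A → unitInterval)
    (hn : ∀ (a : A) (x : X), ∃ b, f a x b = 1) : S3 A → X → S3 A :=
  fun g x => ⟨fun a => (g.1 a).biUnion (fun b => Finset.univ.filter (fun c => f b x c = 1)), by
    intro a
    obtain ⟨b, hb⟩ := g.2 a
    obtain ⟨c, hc⟩ := hn b x
    exact ⟨c, Finset.mem_biUnion.mpr ⟨b, hb, Finset.mem_filter.mpr ⟨Finset.mem_univ c, hc⟩⟩⟩⟩

def F3 (A : Type) [Fintype A] : Set (S3 A) := {g | ∃ c, ∀ a, c ∈ g.1 a}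

lemma F3_closed (f : A → X → A → unitInterval) (hn : ∀ (a : A) (x : X), ∃ b, f a x b = 1) :
    ∀ g ∈ F3 A, ∀ x, step3 f hn g x ∈ F3 A := by
  rintro g ⟨c, hc⟩ x
  obtain ⟨c', hc'⟩ := hn c x
  exact ⟨c', fun a => Finset.mem_biUnion.mpr
    ⟨c, hc a, Finset.mem_filter.mpr ⟨Finset.mem_univ _, hc'⟩⟩⟩

lemma reach3 (f : A → X → A → unitInterval) (hn : ∀ (a : A) (x : X), ∃ b, f a x b = 1) :
    ∀ (w : List X) (g : S3 A) (a b : A),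
      b ∈ (dstar (step3 f hn) g w).1 a ↔ ∃ d ∈ g.1 a, fstar f d w b = 1 := by
  intro w
  induction w with
  | nil =>
    intro g a b
    show b ∈ g.1 a ↔ _
    constructor
    · intro h; exact ⟨b, h, (fstar_nil_one f).mpr rfl⟩
    · rintro ⟨d, hd, hd1⟩
      have : b = d := (fstar_nil_one f).mp hd1
      exact this ▸ hd
  | cons x v ih =>
    intro g a b
    show b ∈ (dstar (step3 f hn) (step3 f hn g x) v).1 a ↔ _
    rw [ih]
    constructor
    · rintro ⟨d, hd, hdv⟩
      obtain ⟨e, he, hde⟩ := Finset.mem_biUnion.mp hd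
      exact ⟨e, he, (fstar_cons_one f).mpr ⟨d, (Finset.mem_filter.mp hde).2, hdv⟩⟩
    · rintro ⟨e, he, hev⟩
      obtain ⟨d, hd1, hd2⟩ := (fstar_cons_one f).mp hev
      exact ⟨d, Finset.mem_biUnion.mpr
        ⟨e, he, Finset.mem_filter.mpr ⟨Finset.mem_univ _, hd1⟩⟩, hd2⟩

lemma DD3_key (f : A → X → A → unitInterval) (hn : ∀ (a : A) (x : X), ∃ b, f a x b = 1)
    (w : List X) : IsDD3 f w ↔ ∀ g : S3 A, dstar (step3 f hn) g w ∈ F3 A := by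
  rw [isDD3_iff f hn]
  constructor
  · rintro ⟨c, hc⟩ g
    refine ⟨c, fun a => ?_⟩
    obtain ⟨d, hd⟩ := g.2 a
    exact (reach3 f hn w g a c).mpr ⟨d, hd, hc d⟩
  · intro h
    obtain ⟨c, hc⟩ := h ⟨fun a => {a}, fun a => ⟨a, Finset.mem_singleton_self a⟩⟩
    refine ⟨c, fun a => ?_⟩
    obtain ⟨d, hd, hd1⟩ := (reach3 f hn w _ a c).mp (hc a)
    have : d = a := Finset.mem_singleton.mp hd
    exact this ▸ hd1
end DD3F
section DD2F
variable {A X : Type} [Fintype A] [Nonempty A] [Fintype X]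

/-- the finite set of values appearing in `f`, together with 0 and 1 -/
noncomputable def Vf (f : A → X → A → unitInterval) : Finset unitInterval :=
  insert 0 (insert 1 (Finset.image (fun p : A × X × A => f p.1 p.2.1 p.2.2) Finset.univ))

lemma zero_mem_Vf (f : A → X → A → unitInterval) : (0 : unitInterval) ∈ Vf f :=
  Finset.mem_insert_self _ _
lemma one_mem_Vf (f : A → X → A → unitInterval) : (1 : unitInterval) ∈ Vf f :=
  Finset.mem_insert_of_mem (Finset.mem_insert_self _ _)
lemma f_mem_Vf (f : A → X → A → unitInterval) (a : A) (x : X) (b : A) : f a x b ∈ Vf f :=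
  Finset.mem_insert_of_mem (Finset.mem_insert_of_mem
    (Finset.mem_image.mpr ⟨(a, x, b), Finset.mem_univ _, rfl⟩))

/-- fuzzy rows with entries in `Vf f` and containing the value 1 -/
def Row (f : A → X → A → unitInterval) : Type :=
  {r : A → {v : unitInterval // v ∈ Vf f} // ∃ b, ((r b : unitInterval) = 1)}

noncomputable instance (f : A → X → A → unitInterval) : Fintype (Row f) := by
  unfold Row; infer_instance

noncomputable def eRow (f : A → X → A → unitInterval) (a : A) : Row f :=
  ⟨fun b => ⟨if b = a then 1 else 0, by
      by_cases h : b = a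
      · rw [if_pos h]; exact one_mem_Vf f
      · rw [if_neg h]; exact zero_mem_Vf f⟩,
   ⟨a, by simp⟩⟩

instance (f : A → X → A → unitInterval) : Nonempty (Row f) :=
  ⟨eRow f (Classical.arbitrary A)⟩

noncomputable def rowStep (f : A → X → A → unitInterval)
    (hn : ∀ (a : A) (x : X), ∃ b, f a x b = 1) : Row f → X → Row f := fun r x =>
  ⟨fun b => ⟨Finset.univ.sup' Finset.univ_nonempty
      (fun c => min ((r.1 c : unitInterval)) (f c x b)), by
    obtain ⟨c, -, hc⟩ := Finset.exists_mem_eq_sup' Finset.univ_nonempty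
      (fun c => min ((r.1 c : unitInterval)) (f c x b))
    rw [hc]
    rcases min_cases ((r.1 c : unitInterval)) (f c x b) with ⟨h, -⟩ | ⟨h, -⟩
    · rw [h]; exact (r.1 c).2
    · rw [h]; exact f_mem_Vf f c x b⟩,
   by
    obtain ⟨c, hc⟩ := r.2
    obtain ⟨b, hb⟩ := hn c x
    refine ⟨b, le_antisymm unitInterval.le_one' ?_⟩
    calc (1 : unitInterval) = min ((r.1 c : unitInterval)) (f c x b) := by
          rw [hc, hb, min_self]
      _ ≤ _ := Finset.le_sup' (fun c => min ((r.1 c : unitInterval)) (f c x b))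
          (Finset.mem_univ c)⟩

lemma sup_min_indicator (u : A → unitInterval) (b : A) :
    Finset.univ.sup' Finset.univ_nonempty
      (fun c => min (u c) (if b = c then (1 : unitInterval) else 0)) = u b := by
  apply le_antisymm
  · apply Finset.sup'_le
    intro c _
    by_cases h : b = c
    · subst h; rw [if_pos rfl, min_eq_left unitInterval.le_one']
    · rw [if_neg h, min_eq_right unitInterval.nonneg']; exact unitInterval.nonneg'
  · calc u b = min (u b) (if b = b then (1:unitInterval) else 0) := by
          rw [if_pos rfl, min_eq_left unitInterval.le_one']
      _ ≤ _ := Finset.le_sup' (fun c => min (u c) (if b = c then (1:unitInterval) else 0))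
          (Finset.mem_univ b)

lemma sup_indicator_min (u : A → unitInterval) (a : A) :
    Finset.univ.sup' Finset.univ_nonempty
      (fun d => min (if d = a then (1 : unitInterval) else 0) (u d)) = u a := by
  apply le_antisymm
  · apply Finset.sup'_le
    intro d _
    by_cases h : d = a
    · subst h; rw [if_pos rfl, min_eq_right unitInterval.le_one']
    · rw [if_neg h, min_eq_left unitInterval.nonneg']; exact unitInterval.nonneg'
  · calc u a = min (if a = a then (1:unitInterval) else 0) (u a) := by
          rw [if_pos rfl, min_eq_right unitInterval.le_one']
      _ ≤ _ := Finset.le_sup' (fun d => min (if d = a then (1:unitInterval) else 0) (u d))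
          (Finset.mem_univ a)

lemma rowStar (f : A → X → A → unitInterval) (hn : ∀ (a : A) (x : X), ∃ b, f a x b = 1) :
    ∀ (w : List X) (r : Row f) (b : A),
      (((dstar (rowStep f hn) r w).1 b : unitInterval)) =
        Finset.univ.sup' Finset.univ_nonempty
          (fun c => min ((r.1 c : unitInterval)) (fstar f c w b)) := by
  intro w
  induction w with
  | nil =>
    intro r b
    show ((r.1 b : unitInterval)) = _
    have : ∀ c : A, fstar f c ([] : List X) b = if b = c then (1:unitInterval) else 0 :=
      fun c => rfl
    simp only [this]
    exact (sup_min_indicator (fun c => (r.1 c : unitInterval)) b).symm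
  | cons x v ih =>
    intro r b
    show (((dstar (rowStep f hn) (rowStep f hn r x) v).1 b : unitInterval)) = _
    rw [ih]
    apply le_antisymm
    · apply Finset.sup'_le
      intro c _
      have hrc : (((rowStep f hn r x).1 c : unitInterval)) =
          Finset.univ.sup' Finset.univ_nonempty
            (fun d => min ((r.1 d : unitInterval)) (f d x c)) := rfl
      rw [hrc]
      obtain ⟨d, -, hd⟩ := Finset.exists_mem_eq_sup' Finset.univ_nonempty
        (fun d => min ((r.1 d : unitInterval)) (f d x c))
      rw [hd]
      have h1 : min (min ((r.1 d : unitInterval)) (f d x c)) (fstar f c v b) ≤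
          min ((r.1 d : unitInterval)) (fstar f d (x :: v) b) := by
        apply le_min
        · exact (min_le_left _ _).trans (min_le_left _ _)
        · have : min (f d x c) (fstar f c v b) ≤ fstar f d (x :: v) b :=
            Finset.le_sup' (fun c => min (f d x c) (fstar f c v b)) (Finset.mem_univ c)
          calc min (min ((r.1 d : unitInterval)) (f d x c)) (fstar f c v b)
              ≤ min (f d x c) (fstar f c v b) :=
                min_le_min (min_le_right _ _) le_rfl
            _ ≤ _ := this
      exact h1.trans (Finset.le_sup'
        (fun d => min ((r.1 d : unitInterval)) (fstar f d (x :: v) b)) (Finset.mem_univ d))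
    · apply Finset.sup'_le
      intro d _
      have hfs : fstar f d (x :: v) b = Finset.univ.sup' Finset.univ_nonempty
          (fun c => min (f d x c) (fstar f c v b)) := rfl
      rw [hfs]
      obtain ⟨c, -, hc⟩ := Finset.exists_mem_eq_sup' Finset.univ_nonempty
        (fun c => min (f d x c) (fstar f c v b))
      rw [hc]
      have hrc : (((rowStep f hn r x).1 c : unitInterval)) =
          Finset.univ.sup' Finset.univ_nonempty
            (fun d => min ((r.1 d : unitInterval)) (f d x c)) := rfl
      have h1 : min ((r.1 d : unitInterval)) (min (f d x c) (fstar f c v b)) ≤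
          min (((rowStep f hn r x).1 c : unitInterval)) (fstar f c v b) := by
        apply le_min
        · rw [hrc]
          have : min ((r.1 d : unitInterval)) (f d x c) ≤
              Finset.univ.sup' Finset.univ_nonempty
                (fun d => min ((r.1 d : unitInterval)) (f d x c)) :=
            Finset.le_sup' (fun d => min ((r.1 d : unitInterval)) (f d x c))
              (Finset.mem_univ d)
          calc min ((r.1 d : unitInterval)) (min (f d x c) (fstar f c v b))
              ≤ min ((r.1 d : unitInterval)) (f d x c) :=
                min_le_min le_rfl (min_le_left _ _)
            _ ≤ _ := this
        · exact (min_le_right _ _).trans (min_le_right _ _)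
      exact h1.trans (Finset.le_sup'
        (fun c => min (((rowStep f hn r x).1 c : unitInterval)) (fstar f c v b))
        (Finset.mem_univ c))
end DD2F

section Assemble
variable {A X : Type} [Fintype A] [Nonempty A] [Fintype X]

noncomputable def step2 (f : A → X → A → unitInterval) (hn : ∀ (a : A) (x : X), ∃ b, f a x b = 1) :
    (A → Row f) → X → (A → Row f) := fun g x a => rowStep f hn (g a) x

lemma step2_dstar (f : A → X → A → unitInterval) (hn : ∀ (a : A) (x : X), ∃ b, f a x b = 1) :
    ∀ (w : List X) (g : A → Row f) (a : A),
      dstar (step2 f hn) g w a = dstar (rowStep f hn) (g a) w := by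
  intro w
  induction w with
  | nil => intro g a; rfl
  | cons x v ih => intro g a; exact ih (step2 f hn g x) a

lemma sup_min_const (f : A → X → A → unitInterval) (r : Row f) (K : unitInterval) :
    Finset.univ.sup' Finset.univ_nonempty
      (fun c => min ((r.1 c : unitInterval)) K) = K := by
  apply le_antisymm
  · exact Finset.sup'_le _ _ (fun c _ => min_le_right _ _)
  · obtain ⟨c, hc⟩ := r.2
    calc K = min ((r.1 c : unitInterval)) K := by
          rw [hc, min_eq_right unitInterval.le_one']
      _ ≤ _ := Finset.le_sup' (fun c => min ((r.1 c : unitInterval)) K) (Finset.mem_univ c)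

lemma eRow_star (f : A → X → A → unitInterval) (hn : ∀ (a : A) (x : X), ∃ b, f a x b = 1)
    (w : List X) (a c : A) :
    ((dstar (rowStep f hn) (eRow f a) w).1 c : unitInterval) = fstar f a w c := by
  rw [rowStar]
  have h : ∀ d, ((eRow f a).1 d : unitInterval) = if d = a then 1 else 0 := fun d => rfl
  simp only [h]
  exact sup_indicator_min (fun d => fstar f d w c) a

lemma DD2_key (f : A → X → A → unitInterval) (hn : ∀ (a : A) (x : X), ∃ b, f a x b = 1)
    (w : List X) :
    IsDD2 f w ↔ ∀ g : A → Row f,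
      dstar (step2 f hn) g w ∈ {g : A → Row f | ∀ a a', g a = g a'} := by
  constructor
  · intro h g a a'
    rw [step2_dstar, step2_dstar]
    apply Subtype.ext; funext b; apply Subtype.ext
    show ((dstar (rowStep f hn) (g a) w).1 b : unitInterval) =
      ((dstar (rowStep f hn) (g a') w).1 b : unitInterval)
    rw [rowStar, rowStar]
    have key : ∀ r : Row f, Finset.univ.sup' Finset.univ_nonempty
        (fun c => min ((r.1 c : unitInterval)) (fstar f c w b)) =
        fstar f (Classical.arbitrary A) w b := by
      intro r
      have h2 : ∀ c, fstar f c w b = fstar f (Classical.arbitrary A) w b :=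
        fun c => h c _ b
      simp only [h2]
      exact sup_min_const f r _
    rw [key, key]
  · intro h a a' c
    have h2 := h (fun a => eRow f a) a a'
    have e1 : ((dstar (step2 f hn) (fun a => eRow f a) w a).1 c : unitInterval) =
        fstar f a w c := by rw [step2_dstar]; exact eRow_star f hn w a c
    have e2 : ((dstar (step2 f hn) (fun a => eRow f a) w a').1 c : unitInterval) =
        fstar f a' w c := by rw [step2_dstar]; exact eRow_star f hn w a' c
    rw [← e1, ← e2, h2]

lemma F2_closed (f : A → X → A → unitInterval) (hn : ∀ (a : A) (x : X), ∃ b, f a x b = 1) :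
    ∀ g ∈ {g : A → Row f | ∀ a a', g a = g a'}, ∀ x,
      step2 f hn g x ∈ {g : A → Row f | ∀ a a', g a = g a'} := by
  intro g hg x a a'
  show rowStep f hn (g a) x = rowStep f hn (g a') x
  rw [hg a a']

lemma FWD2 (f : A → X → A → unitInterval) (hn : ∀ (a : A) (x : X), ∃ b, f a x b = 1) :
    ∃ (Q : Type) (_ : Fintype Q) (_ : Nonempty Q) (δ : Q → X → Q),
      {w : List X | ∃ c, ∀ q, dstar δ q w = c} = DD2set f := by
  obtain ⟨Q, iQ, nQ, δ, hQ⟩ := generalDW (step2 f hn)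
    {g : A → Row f | ∀ a a', g a = g a'} (F2_closed f hn)
  refine ⟨Q, iQ, nQ, δ, ?_⟩
  rw [hQ]
  ext w
  simp only [Set.mem_setOf_eq, DD2set]
  exact (DD2_key f hn w).symm

lemma FWD3 (f : A → X → A → unitInterval) (hn : ∀ (a : A) (x : X), ∃ b, f a x b = 1) :
    ∃ (Q : Type) (_ : Fintype Q) (_ : Nonempty Q) (δ : Q → X → Q),
      {w : List X | ∃ c, ∀ q, dstar δ q w = c} = DD3set f := by
  obtain ⟨Q, iQ, nQ, δ, hQ⟩ := generalDW (step3 f hn) (F3 A) (F3_closed f hn)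
  refine ⟨Q, iQ, nQ, δ, ?_⟩
  rw [hQ]
  ext w
  simp only [Set.mem_setOf_eq, DD3set]
  exact (DD3_key f hn w).symm

end Assemble
end S15

/-- A nonempty language `L ⊆ X*` is the set of DD2-directing words of some normal FFA
iff it is the set of directing words of some directable DFA; likewise for DD3. -/
theorem stmt15 {X : Type} [Fintype X] [Nonempty X] (L : Set (List X)) (hL : L.Nonempty) :
    ((∃ (A : Type) (iF : Fintype A) (iN : Nonempty A) (f : A → X → A → unitInterval),
        (∀ (a : A) (x : X), ∃ b, f a x b = 1) ∧ L = @DD2set A X iF iN f) ↔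
      (∃ (A : Type) (_ : Fintype A) (_ : Nonempty A) (δ : A → X → A),
        (∃ w : List X, ∃ c, ∀ a, dstar δ a w = c) ∧
        L = {w : List X | ∃ c, ∀ a, dstar δ a w = c})) ∧
    ((∃ (A : Type) (iF : Fintype A) (iN : Nonempty A) (f : A → X → A → unitInterval),
        (∀ (a : A) (x : X), ∃ b, f a x b = 1) ∧ L = @DD3set A X iF iN f) ↔
      (∃ (A : Type) (_ : Fintype A) (_ : Nonempty A) (δ : A → X → A),
        (∃ w : List X, ∃ c, ∀ a, dstar δ a w = c) ∧
        L = {w : List X | ∃ c, ∀ a, dstar δ a w = c})) := by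
  constructor
  · constructor
    · rintro ⟨A, iF, iN, f, hn, hL2⟩
      obtain ⟨Q, iQ, nQ, δ, hQ⟩ := @S15.FWD2 A X iF iN _ f hn
      refine ⟨Q, iQ, nQ, δ, ?_, by rw [hL2, hQ]⟩
      obtain ⟨w, hw⟩ := hL
      rw [hL2, ← hQ] at hw
      exact ⟨w, hw⟩
    · rintro ⟨A, iF, iN, δ, -, hLD⟩
      exact ⟨A, iF, iN, S15.crisp δ, S15.crisp_normal δ, by rw [hLD, S15.crisp_DD2]⟩
  · constructor
    · rintro ⟨A, iF, iN, f, hn, hL3⟩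
      obtain ⟨Q, iQ, nQ, δ, hQ⟩ := @S15.FWD3 A X iF iN _ f hn
      refine ⟨Q, iQ, nQ, δ, ?_, by rw [hL3, hQ]⟩
      obtain ⟨w, hw⟩ := hL
      rw [hL3, ← hQ] at hw
      exact ⟨w, hw⟩
    · rintro ⟨A, iF, iN, δ, -, hLD⟩
      exact ⟨A, iF, iN, S15.crisp δ, S15.crisp_normal δ, by rw [hLD, S15.crisp_DD3]⟩
end

section
/- Let G = (B, g) be a subautomaton of a fuzzy finite automaton F = (A, f) over an alphabet X. Then DD_1(F) ⊆ DD_1(G), DD_2(F) ⊆ DD_2(G) and DD_3(F) ⊆ DD_3(G); hence every subautomaton of a DDi-directable FFA is DDi-directable (i = 1, 2, 3). Moreover, if F is normal, then so is G. -/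
open scoped Classical

section Aux
variable {A X : Type*} [Fintype A] [Nonempty A]

lemma unit_nonneg (x : unitInterval) : (0 : unitInterval) ≤ x := x.2.1

lemma fstar_zero_out (f : A → X → A → unitInterval) (B : Finset A)
    (hclosed : ∀ b ∈ B, ∀ (x : X) (c : A), 0 < f b x c → c ∈ B) :
    ∀ (w : List X) (b : A), b ∈ B → ∀ c, c ∉ B → fstar f b w c = 0 := by
  intro w
  induction w with
  | nil =>
    intro b hb c hc
    simp only [fstar]
    have : c ≠ b := fun h => hc (h ▸ hb)
    simp [this]
  | cons x v ih =>
    intro b hb c hc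
    simp only [fstar]
    refine le_antisymm (Finset.sup'_le _ _ ?_) (unit_nonneg _)
    intro a _
    by_cases haB : a ∈ B
    · rw [ih a haB c hc]
      exact min_le_right _ _
    · have hfa : f b x a = 0 :=
        le_antisymm (not_lt.1 fun h => haB (hclosed b hb x a h)) (unit_nonneg _)
      rw [hfa]
      exact min_le_left _ _

lemma fstar_restrict (f : A → X → A → unitInterval) (B : Finset A) (hB : B.Nonempty)
    (hclosed : ∀ b ∈ B, ∀ (x : X) (c : A), 0 < f b x c → c ∈ B) :
    haveI : Nonempty ↥B := ⟨⟨hB.choose, hB.choose_spec⟩⟩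
    ∀ (w : List X) (b c : ↥B),
      fstar (fun (b : ↥B) (x : X) (b' : ↥B) => f ↑b x ↑b') b w c = fstar f ↑b w ↑c := by
  haveI : Nonempty ↥B := ⟨⟨hB.choose, hB.choose_spec⟩⟩
  intro w
  induction w with
  | nil =>
    intro b c
    simp only [fstar]
    by_cases h : c = b
    · simp [h]
    · have : (c : A) ≠ (b : A) := fun hh => h (Subtype.ext hh)
      simp [h, this]
  | cons x v ih =>
    intro b c
    simp only [fstar]
    apply le_antisymm
    · refine Finset.sup'_le _ _ ?_
      intro a _
      refine le_trans ?_ (Finset.le_sup' _ (Finset.mem_univ (a : A)))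
      rw [ih a c]
    · refine Finset.sup'_le _ _ ?_
      intro a _
      by_cases haB : a ∈ B
      · refine le_trans ?_ (Finset.le_sup' _ (Finset.mem_univ (⟨a, haB⟩ : ↥B)))
        rw [ih ⟨a, haB⟩ c]
      · have hfa : f ↑b x a = 0 :=
          le_antisymm (not_lt.1 fun h => haB (hclosed ↑b b.2 x a h)) (unit_nonneg _)
        rw [hfa]
        exact le_trans (min_le_left _ _)
          (le_trans (unit_nonneg _) (Finset.le_sup' _ (Finset.mem_univ b)))

end Aux

/-- If `G` is the subautomaton of an FFA `F` determined by a nonempty closed subset `B`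
of states, then `DD_i(F) ⊆ DD_i(G)` for `i = 1, 2, 3` (hence every subautomaton of a
DDi-directable FFA is DDi-directable), and if `F` is normal then so is `G`. -/
theorem stmt16 {A X : Type*} [Fintype X] [Nonempty X] [Fintype A] [Nonempty A]
    (f : A → X → A → unitInterval) (B : Finset A) (hB : B.Nonempty)
    (hclosed : ∀ b ∈ B, ∀ (x : X) (c : A), 0 < f b x c → c ∈ B) :
    haveI : Nonempty ↥B := ⟨⟨hB.choose, hB.choose_spec⟩⟩
    ((∀ w : List X, IsDD1 f w → IsDD1 (fun (b : ↥B) (x : X) (b' : ↥B) => f ↑b x ↑b') w) ∧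
     (∀ w : List X, IsDD2 f w → IsDD2 (fun (b : ↥B) (x : X) (b' : ↥B) => f ↑b x ↑b') w) ∧
     (∀ w : List X, IsDD3 f w → IsDD3 (fun (b : ↥B) (x : X) (b' : ↥B) => f ↑b x ↑b') w) ∧
     ((∀ (a : A) (x : X), ∃ c, f a x c = 1) →
       ∀ (b : ↥B) (x : X), ∃ c : ↥B, f ↑b x ↑c = 1)) := by

  haveI : Nonempty ↥B := ⟨⟨hB.choose, hB.choose_spec⟩⟩
  have hz := fstar_zero_out f B hclosed
  have hr := fstar_restrict f B hB hclosed
  refine ⟨?_, ?_, ?_, ?_⟩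
  · rintro w ⟨c, r, hrpos, hprop⟩
    have hcB : c ∈ B := by
      by_contra hc
      have := hz w hB.choose hB.choose_spec c hc
      rw [(hprop hB.choose).1] at this
      exact absurd this (ne_of_gt hrpos)
    refine ⟨⟨c, hcB⟩, r, hrpos, fun a => ⟨?_, ?_⟩⟩
    · rw [hr w a ⟨c, hcB⟩]; exact (hprop ↑a).1
    · intro b hb
      rw [hr w a b]
      exact (hprop ↑a).2 ↑b (fun h => hb (Subtype.ext h))
  · intro w h a b c
    rw [hr w a c, hr w b c]; exact h ↑a ↑b ↑c
  · rintro w ⟨c, hprop⟩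
    have hcB : c ∈ B := by
      by_contra hc
      have := hz w hB.choose hB.choose_spec c hc
      exact absurd this (ne_of_gt (hprop hB.choose).1)
    refine ⟨⟨c, hcB⟩, fun a => ⟨?_, ?_⟩⟩
    · rw [hr w a ⟨c, hcB⟩]; exact (hprop ↑a).1
    · intro b
      rw [hr w a b, hr w a ⟨c, hcB⟩]
      exact (hprop ↑a).2 ↑b
  · intro hnorm b x
    obtain ⟨c, hc⟩ := hnorm ↑b x
    have hcB : c ∈ B := hclosed ↑b b.2 x c (by rw [hc]; norm_num)
    exact ⟨⟨c, hcB⟩, hc⟩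
end

section
/- Let φ : F → G be an epimorphism of fuzzy finite automata F = (A, f) and G = (B, g) over an alphabet X. Then for all a ∈ A, b ∈ B and w ∈ X*: g*(φ(a), w, b) = max{f*(a, w, a') : a' ∈ A, φ(a') = b}, and the image of F(a, w) under φ equals G(φ(a), w). -/
open scoped Classical

/-- If `φ : F → G` is an epimorphism of FFAs, then for all `a ∈ A`, `b ∈ B`, `w ∈ X*`,
`g*(φ(a), w, b) = max{f*(a, w, a') : φ(a') = b}`, and `φ(F(a, w)) = G(φ(a), w)`. -/
theorem stmt17 {A B X : Type*} [Fintype X] [Nonempty X] [Fintype A] [Nonempty A]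
    [Fintype B] [Nonempty B]
    (f : A → X → A → unitInterval) (g : B → X → B → unitInterval)
    (phi : A → B) (hsurj : Function.Surjective phi)
    (hhom : ∀ (a : A) (x : X) (b : B),
      (∃ a', phi a' = b ∧ g (phi a) x b = f a x a') ∧
      (∀ a', phi a' = b → f a x a' ≤ g (phi a) x b)) :
    (∀ (a : A) (w : List X) (b : B),
      (∃ a', phi a' = b ∧ fstar g (phi a) w b = fstar f a w a') ∧
      (∀ a', phi a' = b → fstar f a w a' ≤ fstar g (phi a) w b)) ∧
    (∀ (a : A) (w : List X), phi '' freach f a w = freach g (phi a) w) := by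
  have hfil : ∀ b : B, (Finset.univ.filter (fun a' => phi a' = b)).Nonempty := by
    intro b
    obtain ⟨a, ha⟩ := hsurj b
    exact ⟨a, by simp [ha]⟩
  have key : ∀ (w : List X) (a : A) (b : B),
      fstar g (phi a) w b
        = (Finset.univ.filter (fun a' => phi a' = b)).sup' (hfil b)
            (fun a' => fstar f a w a') := by
    intro w
    induction w with
    | nil =>
      intro a b
      by_cases hb : b = phi a
      · subst hb
        apply le_antisymm
        · have ha : a ∈ Finset.univ.filter (fun a' => phi a' = phi a) := by simp
          calc fstar g (phi a) [] (phi a) = 1 := by simp [fstar]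
            _ = fstar f a [] a := by simp [fstar]
            _ ≤ _ := Finset.le_sup' _ ha
        · apply Finset.sup'_le
          intro a' _
          calc fstar f a [] a' ≤ 1 := (fstar f a [] a').2.2
            _ = fstar g (phi a) [] (phi a) := by simp [fstar]
      · apply le_antisymm
        · calc fstar g (phi a) [] b = 0 := by simp [fstar, hb]
            _ ≤ _ := by
                obtain ⟨a', ha'⟩ := hfil b
                refine le_trans ?_ (Finset.le_sup' _ ha')
                exact (fstar f a [] a').2.1
        · apply Finset.sup'_le
          intro a' ha'
          simp only [Finset.mem_filter] at ha'
          have hne : a' ≠ a := fun h => hb (h ▸ ha'.2).symm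
          calc fstar f a [] a' = 0 := by simp [fstar, hne]
            _ ≤ fstar g (phi a) [] b := (fstar g (phi a) [] b).2.1
    | cons x v ih =>
      intro a b
      apply le_antisymm
      · show Finset.univ.sup' _ (fun c => min (g (phi a) x c) (fstar g c v b)) ≤ _
        apply Finset.sup'_le
        intro c _
        obtain ⟨c0, hc0, hgc⟩ := (hhom a x c).1
        obtain ⟨a0, ha0mem, ha0⟩ := Finset.exists_mem_eq_sup' (hfil b)
          (fun a' => fstar f c0 v a')
        have h1 : fstar g c v b = fstar f c0 v a0 := by
          rw [← hc0, ih c0 b, ha0]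
        rw [hgc, h1]
        have step1 : min (f a x c0) (fstar f c0 v a0) ≤ fstar f a (x :: v) a0 :=
          Finset.le_sup' (fun c' => min (f a x c') (fstar f c' v a0)) (Finset.mem_univ c0)
        exact le_trans step1 (Finset.le_sup' _ ha0mem)
      · apply Finset.sup'_le
        intro a' ha'
        simp only [Finset.mem_filter] at ha'
        show fstar f a (x :: v) a' ≤ fstar g (phi a) (x :: v) b
        apply Finset.sup'_le
        intro c' _
        have h1 : f a x c' ≤ g (phi a) x (phi c') := (hhom a x (phi c')).2 c' rfl
        have h2 : fstar f c' v a' ≤ fstar g (phi c') v b := by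
          rw [ih c' b]
          exact Finset.le_sup' _ (by simp [ha'.2])
        calc min (f a x c') (fstar f c' v a')
            ≤ min (g (phi a) x (phi c')) (fstar g (phi c') v b) := min_le_min h1 h2
          _ ≤ fstar g (phi a) (x :: v) b :=
              Finset.le_sup' (fun c => min (g (phi a) x c) (fstar g c v b))
                (Finset.mem_univ (phi c'))
  constructor
  · intro a w b
    obtain ⟨a0, ha0mem, ha0⟩ := Finset.exists_mem_eq_sup' (hfil b)
      (fun a' => fstar f a w a')
    simp only [Finset.mem_filter] at ha0mem
    refine ⟨⟨a0, ha0mem.2, by rw [key w a b, ha0]⟩, ?_⟩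
    intro a' hphi
    rw [key w a b]
    exact Finset.le_sup' _ (by simp [hphi])
  · intro a w
    ext b
    simp only [Set.mem_image, freach, Set.mem_setOf_eq]
    constructor
    · rintro ⟨a', hpos, rfl⟩
      rw [key w a (phi a')]
      exact lt_of_lt_of_le hpos (Finset.le_sup' _ (by simp))
    · intro hpos
      rw [key w a b, Finset.lt_sup'_iff] at hpos
      obtain ⟨a', ha', hpos⟩ := hpos
      simp only [Finset.mem_filter] at ha'
      exact ⟨a', hpos, ha'.2⟩
end
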